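/- Let (X,d) be a metric space and let γ₁, γ₂ : [0,1] → X be two constant-speed minimizing geodesics of lengths L₁ and L₂ respectively, satisfying d(γ₁(0),γ₁(1))² + d(γ₂(0),γ₂(1))² ≤ d(γ₁(0),γ₂(1))² + d(γ₂(0),γ₁(1))². Let D be an upper bound on the diameter of the union of the images of γ₁ and γ₂. Then there exists a numeric constant C (independent of the data) such that for any t₀ ∈ (0,1), |L₁ − L₂| ≤ (C·√D / √(t₀(1−t₀))) · √(d(γ₁(t₀), γ₂(t₀))). -/

import Mathlib

open Set Real

/-- A constant-speed minimizing geodesic `γ : [0,1] → X` of length `L`: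
`d(γ s, γ t) = |s - t| * L` for all `s, t ∈ [0,1]`. -/
def IsGeodesic {X : Type} [MetricSpace X] (γ : ℝ → X) (L : ℝ) : Prop :=
  ∀ s ∈ Set.Icc (0:ℝ) 1, ∀ t ∈ Set.Icc (0:ℝ) 1, dist (γ s) (γ t) = |s - t| * L

/-- Villani's shortening lemma: there is a numeric constant `C` (independent of all
the data) such that for any metric space, any two constant-speed minimizing geodesics
`γ₁, γ₂` of lengths `L₁, L₂` satisfying the quadratic endpoint inequality, any diameter
bound `D` on the union of their images, and any `t₀ ∈ (0,1)`,
`|L₁ - L₂| ≤ C √D / √(t₀(1-t₀)) · √(d(γ₁ t₀, γ₂ t₀))`. -/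
theorem shortening_lemma :
    ∃ C : ℝ, 0 < C ∧
      ∀ (X : Type) [MetricSpace X] (γ₁ γ₂ : ℝ → X) (L₁ L₂ D : ℝ),
        0 ≤ L₁ → 0 ≤ L₂ →
        IsGeodesic γ₁ L₁ → IsGeodesic γ₂ L₂ →
        dist (γ₁ 0) (γ₁ 1) ^ 2 + dist (γ₂ 0) (γ₂ 1) ^ 2 ≤
          dist (γ₁ 0) (γ₂ 1) ^ 2 + dist (γ₂ 0) (γ₁ 1) ^ 2 →
        (∀ s ∈ Set.Icc (0:ℝ) 1, ∀ t ∈ Set.Icc (0:ℝ) 1,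
          dist (γ₁ s) (γ₁ t) ≤ D ∧ dist (γ₁ s) (γ₂ t) ≤ D ∧ dist (γ₂ s) (γ₂ t) ≤ D) →
        ∀ t₀ ∈ Set.Ioo (0:ℝ) 1,
          |L₁ - L₂| ≤ C * Real.sqrt D / Real.sqrt (t₀ * (1 - t₀)) *
            Real.sqrt (dist (γ₁ t₀) (γ₂ t₀)) := by
  refine ⟨2, by norm_num, ?_⟩
  intro X _ γ₁ γ₂ L₁ L₂ D hL₁ hL₂ hg₁ hg₂ hquad hD t₀ ht₀
  obtain ⟨ht₀0, ht₀1⟩ := ht₀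
  have h01 : (0:ℝ) ∈ Set.Icc (0:ℝ) 1 := by norm_num
  have h11 : (1:ℝ) ∈ Set.Icc (0:ℝ) 1 := by norm_num
  have ht : t₀ ∈ Set.Icc (0:ℝ) 1 := ⟨le_of_lt ht₀0, le_of_lt ht₀1⟩
  set ε := dist (γ₁ t₀) (γ₂ t₀) with hε
  have hε0 : 0 ≤ ε := dist_nonneg
  have e1 : dist (γ₁ 0) (γ₁ 1) = L₁ := by simpa using hg₁ 0 h01 1 h11
  have e2 : dist (γ₂ 0) (γ₂ 1) = L₂ := by simpa using hg₂ 0 h01 1 h11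
  have e1t : dist (γ₁ 0) (γ₁ t₀) = t₀ * L₁ := by
    have := hg₁ 0 h01 t₀ ht
    rwa [zero_sub, abs_neg, abs_of_nonneg ht.1] at this
  have e2t : dist (γ₂ t₀) (γ₂ 1) = (1 - t₀) * L₂ := by
    have := hg₂ t₀ ht 1 h11
    rwa [abs_sub_comm, abs_of_nonneg (by linarith : (0:ℝ) ≤ 1 - t₀)] at this
  have e1t' : dist (γ₁ t₀) (γ₁ 1) = (1 - t₀) * L₁ := by
    have := hg₁ t₀ ht 1 h11
    rwa [abs_sub_comm, abs_of_nonneg (by linarith : (0:ℝ) ≤ 1 - t₀)] at this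
  have e2t' : dist (γ₂ 0) (γ₂ t₀) = t₀ * L₂ := by
    have := hg₂ 0 h01 t₀ ht
    rwa [zero_sub, abs_neg, abs_of_nonneg ht.1] at this
  have tri1 : dist (γ₁ 0) (γ₂ 1) ≤ t₀ * L₁ + ε + (1 - t₀) * L₂ := by
    calc dist (γ₁ 0) (γ₂ 1)
        ≤ dist (γ₁ 0) (γ₁ t₀) + dist (γ₁ t₀) (γ₂ t₀) + dist (γ₂ t₀) (γ₂ 1) :=
          dist_triangle4 _ _ _ _
      _ = t₀ * L₁ + ε + (1 - t₀) * L₂ := by rw [e1t, e2t]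
  have tri2 : dist (γ₂ 0) (γ₁ 1) ≤ t₀ * L₂ + ε + (1 - t₀) * L₁ := by
    calc dist (γ₂ 0) (γ₁ 1)
        ≤ dist (γ₂ 0) (γ₂ t₀) + dist (γ₂ t₀) (γ₁ t₀) + dist (γ₁ t₀) (γ₁ 1) :=
          dist_triangle4 _ _ _ _
      _ = t₀ * L₂ + ε + (1 - t₀) * L₁ := by rw [e2t', dist_comm (γ₂ t₀), e1t']
  have hL₁D : L₁ ≤ D := e1 ▸ (hD 0 h01 1 h11).1
  have hL₂D : L₂ ≤ D := e2 ▸ (hD 0 h01 1 h11).2.2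
  have hεD : ε ≤ D := (hD t₀ ht t₀ ht).2.1
  have hD0 : 0 ≤ D := le_trans hε0 hεD
  have sq1 : dist (γ₁ 0) (γ₂ 1) ^ 2 ≤ (t₀ * L₁ + ε + (1 - t₀) * L₂) ^ 2 :=
    pow_le_pow_left₀ dist_nonneg tri1 2
  have sq2 : dist (γ₂ 0) (γ₁ 1) ^ 2 ≤ (t₀ * L₂ + ε + (1 - t₀) * L₁) ^ 2 :=
    pow_le_pow_left₀ dist_nonneg tri2 2
  rw [e1, e2] at hquad
  have key : (L₁ - L₂) ^ 2 * (t₀ * (1 - t₀)) ≤ 3 * D * ε := by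
    nlinarith [mul_nonneg hε0 (sub_nonneg.2 hL₁D), mul_nonneg hε0 (sub_nonneg.2 hL₂D),
      mul_nonneg hε0 (sub_nonneg.2 hεD), sq_nonneg (L₁ - L₂)]
  set p := t₀ * (1 - t₀) with hp
  have hp0 : 0 < p := mul_pos ht₀0 (by linarith)
  have key2 : (L₁ - L₂) ^ 2 ≤ 4 * D * ε / p := by
    rw [le_div_iff₀ hp0]
    nlinarith [mul_nonneg hD0 hε0]
  have rhs_eq : 2 * Real.sqrt D / Real.sqrt p * Real.sqrt ε
      = Real.sqrt (4 * D * ε / p) := by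
    rw [show (4 : ℝ) * D * ε / p = (2 * Real.sqrt D / Real.sqrt p * Real.sqrt ε) ^ 2 by
      have hsp : Real.sqrt p ≠ 0 := ne_of_gt (Real.sqrt_pos.2 hp0)
      field_simp
      rw [Real.sq_sqrt hD0, Real.sq_sqrt hε0, Real.sq_sqrt hp0.le]
      ring]
    rw [Real.sqrt_sq (by positivity)]
  calc |L₁ - L₂| = Real.sqrt ((L₁ - L₂) ^ 2) := (Real.sqrt_sq_eq_abs _).symm
    _ ≤ Real.sqrt (4 * D * ε / p) := Real.sqrt_le_sqrt key2
    _ = 2 * Real.sqrt D / Real.sqrt p * Real.sqrt ε := rhs_eq.symm
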